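/- Let H be a Hilbert space, (κ_ρ) a one-parameter group of unitaries, and A a closed operator with κ-invariant domain D_max ⊆ H satisfying the degree-m homogeneity A − ρ^m λ = ρ^m κ_ρ (A − λ) κ_ρ^{-1}. Let Λ be a closed sector in ℂ, R > 0, and P(λ) : H → D_max a family of bounded operators for λ ∈ Λ with |λ| ≥ R. Then the two estimates ‖P(λ)‖_{L(H)} ≤ C/|λ| and ‖P(λ)‖_{L(H, D_max)} ≤ C (with D_max carrying the graph norm of A) hold for some C > 0 and all λ ∈ Λ_R if and only if ‖κ_{|λ|^{1/m}}^{-1} P(λ)‖_{L(H, D_max)} ≤ C'/|λ| holds for some C' > 0 and all λ ∈ Λ_R. -/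

import Mathlib

private lemma sqrt_sq_add_sq_le {a b : ℝ} (ha : 0 ≤ a) (hb : 0 ≤ b) :
    Real.sqrt (a ^ 2 + b ^ 2) ≤ a + b := by
  have h : a ^ 2 + b ^ 2 ≤ (a + b) ^ 2 := by nlinarith
  calc Real.sqrt (a ^ 2 + b ^ 2) ≤ Real.sqrt ((a + b) ^ 2) := Real.sqrt_le_sqrt h
    _ = a + b := by rw [Real.sqrt_sq (by linarith)]

/-- The pair of estimates `‖P(λ)‖_{L(H)} ≤ C/|λ|` and `‖P(λ)‖_{L(H,D_max)} ≤ C` (graph norm)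
holds on `Λ_R` iff the single estimate
`‖κ_{|λ|^{1/m}}^{-1} P(λ)‖_{L(H,D_max)} ≤ C'/|λ|` holds on `Λ_R`. -/
theorem stmt_16 {H : Type*} [NormedAddCommGroup H] [InnerProductSpace ℂ H] [CompleteSpace H]
    (κ : ℝ → (H ≃ₗᵢ[ℂ] H))
    (hκmul : ∀ ρ σ : ℝ, 0 < ρ → 0 < σ → ∀ x : H, κ (ρ * σ) x = κ ρ (κ σ x))
    (hκone : ∀ x : H, κ 1 x = x)
    (Dmax : Submodule ℂ H) (m : ℕ) (hm : 0 < m)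
    (A : ↥Dmax →ₗ[ℂ] H)
    (hκDmax : ∀ ρ : ℝ, 0 < ρ → ∀ x ∈ Dmax, κ ρ x ∈ Dmax)
    (hhom : ∀ (ρ : ℝ), 0 < ρ → ∀ (u : ↥Dmax) (h : κ ρ (u : H) ∈ Dmax),
      A ⟨κ ρ (u : H), h⟩ = ((ρ ^ m : ℝ) : ℂ) • κ ρ (A u))
    -- Λ a closed sector, R > 0
    (Λ : Set ℂ) (hΛclosed : IsClosed Λ)
    (hΛsector : ∀ lam ∈ Λ, ∀ r : ℝ, 0 ≤ r → (r : ℂ) * lam ∈ Λ)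
    (R : ℝ) (hR : 0 < R)
    -- the family of operators P(λ) : H → D_max
    (P : ℂ → (H →ₗ[ℂ] H)) (hP : ∀ (lam : ℂ) (f : H), P lam f ∈ Dmax) :
    (∃ C > (0 : ℝ), ∀ lam ∈ Λ, R ≤ ‖lam‖ →
        (∀ f : H, ‖P lam f‖ ≤ C / ‖lam‖ * ‖f‖) ∧
        (∀ (f : H) (h : P lam f ∈ Dmax),
          Real.sqrt (‖A ⟨P lam f, h⟩‖ ^ 2 + ‖P lam f‖ ^ 2) ≤ C * ‖f‖)) ↔
    (∃ C > (0 : ℝ), ∀ lam ∈ Λ, R ≤ ‖lam‖ →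
        ∀ (f : H) (h : κ ((‖lam‖ ^ ((m : ℝ)⁻¹))⁻¹) (P lam f) ∈ Dmax),
          Real.sqrt (‖A ⟨κ ((‖lam‖ ^ ((m : ℝ)⁻¹))⁻¹) (P lam f), h⟩‖ ^ 2
              + ‖κ ((‖lam‖ ^ ((m : ℝ)⁻¹))⁻¹) (P lam f)‖ ^ 2)
            ≤ C / ‖lam‖ * ‖f‖) := by
  -- Key identity: ‖A (κ ρ⁻¹ (P λ f))‖ = |λ|⁻¹ ‖A (P λ f)‖ where ρ = |λ|^(1/m).
  have key : ∀ (lam : ℂ), R ≤ ‖lam‖ → ∀ (f : H)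
      (h : κ ((‖lam‖ ^ ((m : ℝ)⁻¹))⁻¹) (P lam f) ∈ Dmax),
      ‖A ⟨κ ((‖lam‖ ^ ((m : ℝ)⁻¹))⁻¹) (P lam f), h⟩‖
        = (‖lam‖)⁻¹ * ‖A ⟨P lam f, hP lam f⟩‖ := by
    intro lam hlam f h
    have habs : 0 < ‖lam‖ := lt_of_lt_of_le hR hlam
    set ρ : ℝ := ‖lam‖ ^ ((m : ℝ)⁻¹) with hρdef
    have hρ : 0 < ρ := Real.rpow_pos_of_pos habs _
    have hρm : ρ ^ m = ‖lam‖ := by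
      rw [hρdef, ← Real.rpow_natCast (‖lam‖ ^ ((m : ℝ)⁻¹)) m,
        ← Real.rpow_mul habs.le, inv_mul_cancel₀ (by exact_mod_cast hm.ne'), Real.rpow_one]
    have := hhom ρ⁻¹ (inv_pos.mpr hρ) ⟨P lam f, hP lam f⟩ h
    rw [this, norm_smul, LinearIsometryEquiv.norm_map]
    simp [hρm, abs_of_pos (pow_pos (inv_pos.mpr hρ) m), inv_pow]
  constructor
  · rintro ⟨C, hC, hest⟩
    refine ⟨2 * C, by linarith, fun lam hlam hlamR f h => ?_⟩
    have habs : 0 < ‖lam‖ := lt_of_lt_of_le hR hlamR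
    obtain ⟨h1, h2⟩ := hest lam hlam hlamR
    have hA : ‖A ⟨P lam f, hP lam f⟩‖ ≤ C * ‖f‖ := by
      calc ‖A ⟨P lam f, hP lam f⟩‖
          = Real.sqrt (‖A ⟨P lam f, hP lam f⟩‖ ^ 2) := by
            rw [Real.sqrt_sq (norm_nonneg _)]
        _ ≤ Real.sqrt (‖A ⟨P lam f, hP lam f⟩‖ ^ 2 + ‖P lam f‖ ^ 2) :=
            Real.sqrt_le_sqrt (le_add_of_nonneg_right (by positivity))
        _ ≤ C * ‖f‖ := h2 f (hP lam f)
    rw [key lam hlamR f h, LinearIsometryEquiv.norm_map]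
    calc Real.sqrt (((‖lam‖)⁻¹ * ‖A ⟨P lam f, hP lam f⟩‖) ^ 2 + ‖P lam f‖ ^ 2)
        ≤ (‖lam‖)⁻¹ * ‖A ⟨P lam f, hP lam f⟩‖ + ‖P lam f‖ :=
          sqrt_sq_add_sq_le (by positivity) (norm_nonneg _)
      _ ≤ (‖lam‖)⁻¹ * (C * ‖f‖) + C / ‖lam‖ * ‖f‖ := by
          gcongr; exact h1 f
      _ = 2 * C / ‖lam‖ * ‖f‖ := by field_simp; ring
  · rintro ⟨C, hC, hest⟩
    refine ⟨C * (1 + 1 / R), by positivity, fun lam hlam hlamR => ?_⟩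
    have habs : 0 < ‖lam‖ := lt_of_lt_of_le hR hlamR
    have hρ : 0 < (‖lam‖ ^ ((m : ℝ)⁻¹))⁻¹ :=
      inv_pos.mpr (Real.rpow_pos_of_pos habs _)
    have both : ∀ f : H, ‖P lam f‖ ≤ C / ‖lam‖ * ‖f‖ ∧
        ‖A ⟨P lam f, hP lam f⟩‖ ≤ C * ‖f‖ := by
      intro f
      have hmem : κ ((‖lam‖ ^ ((m : ℝ)⁻¹))⁻¹) (P lam f) ∈ Dmax :=
        hκDmax _ hρ _ (hP lam f)
      have hE := hest lam hlam hlamR f hmem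
      rw [key lam hlamR f hmem, LinearIsometryEquiv.norm_map] at hE
      constructor
      · calc ‖P lam f‖ = Real.sqrt (‖P lam f‖ ^ 2) := by rw [Real.sqrt_sq (norm_nonneg _)]
          _ ≤ Real.sqrt (((‖lam‖)⁻¹ * ‖A ⟨P lam f, hP lam f⟩‖) ^ 2
                + ‖P lam f‖ ^ 2) := Real.sqrt_le_sqrt (le_add_of_nonneg_left (by positivity))
          _ ≤ C / ‖lam‖ * ‖f‖ := hE
      · have h1 : (‖lam‖)⁻¹ * ‖A ⟨P lam f, hP lam f⟩‖
            ≤ C / ‖lam‖ * ‖f‖ := by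
          calc (‖lam‖)⁻¹ * ‖A ⟨P lam f, hP lam f⟩‖
              = Real.sqrt (((‖lam‖)⁻¹ * ‖A ⟨P lam f, hP lam f⟩‖) ^ 2) := by
                rw [Real.sqrt_sq (by positivity)]
            _ ≤ Real.sqrt (((‖lam‖)⁻¹ * ‖A ⟨P lam f, hP lam f⟩‖) ^ 2
                  + ‖P lam f‖ ^ 2) := Real.sqrt_le_sqrt (le_add_of_nonneg_right (by positivity))
            _ ≤ C / ‖lam‖ * ‖f‖ := hE
        have h2 := mul_le_mul_of_nonneg_left h1 habs.le
        rw [← mul_assoc, mul_inv_cancel₀ habs.ne', one_mul] at h2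
        calc ‖A ⟨P lam f, hP lam f⟩‖
            ≤ ‖lam‖ * (C / ‖lam‖ * ‖f‖) := h2
          _ = C * ‖f‖ := by field_simp
    have hCle : C ≤ C * (1 + 1 / R) := by
      have h01 : (0:ℝ) < 1 / R := by positivity
      nlinarith
    refine ⟨fun f => le_trans (both f).1 (by gcongr), fun f h => ?_⟩
    calc Real.sqrt (‖A ⟨P lam f, h⟩‖ ^ 2 + ‖P lam f‖ ^ 2)
        ≤ ‖A ⟨P lam f, h⟩‖ + ‖P lam f‖ :=
          sqrt_sq_add_sq_le (norm_nonneg _) (norm_nonneg _)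
      _ ≤ C * ‖f‖ + C / ‖lam‖ * ‖f‖ := by
          gcongr ?_ + ?_
          · exact (both f).2
          · exact (both f).1
      _ ≤ C * ‖f‖ + C / R * ‖f‖ := by gcongr
      _ = C * (1 + 1 / R) * ‖f‖ := by ring
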